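/- Let F be a field of characteristic 2, let p = x^d + p₁x^{d-1} + … + p_d ∈ F[x] be a monic irreducible polynomial of odd degree d = 2e+1 (where p_k denotes the coefficient of x^{d-k}, with p₀ = 1), let L = F[x]/(p), and let t_p : L → F be the F-linear map with t_p(x^j) = 0 for 0 ≤ j ≤ d-2 and t_p(x^{d-1}) = 1. Let a ∈ F and let i ≥ 0 be an integer. Then the Scharlau transfer t_p∘[1, ax^i] (a quadratic form of dimension 2d over F) is Witt equivalent to the orthogonal sum ⊥_{j=0}^{e} [p_{2j}, aγ_{i-2j}], where γ_n ∈ F is the coefficient of x^{d-1} in the remainder of x^{d+n-1} upon division by p for n ≥ 0, and γ_n := 0 for n < 0. -/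

import Mathlib

open QuadraticMap Polynomial

/-- The binary quadratic form `[a,b] : (u,v) ↦ a u² + u v + b v²` over `K`. -/
noncomputable def binQF (K : Type*) [CommRing K] (a b : K) : QuadraticForm K (K × K) :=
  a • QuadraticMap.linMulLin (LinearMap.fst K K K) (LinearMap.fst K K K)
    + QuadraticMap.linMulLin (LinearMap.fst K K K) (LinearMap.snd K K K)
    + b • QuadraticMap.linMulLin (LinearMap.snd K K K) (LinearMap.snd K K K)

/-- The hyperbolic plane `(u,v) ↦ u v` over `K`. -/
noncomputable def hypQF (K : Type*) [CommRing K] : QuadraticForm K (K × K) :=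
  QuadraticMap.linMulLin (LinearMap.fst K K K) (LinearMap.snd K K K)

/-- The orthogonal sum of `r` copies of the hyperbolic plane over `K`. -/
noncomputable def hypPow (K : Type*) [CommRing K] (r : ℕ) : QuadraticForm K (Fin r → K × K) :=
  QuadraticMap.pi fun _ => hypQF K

/-- Witt equivalence of quadratic forms over `K`: `Q₁ ⊥ H^{⊥r}` is isometric to
`Q₂ ⊥ H^{⊥s}` for some `r, s`. -/
def WittEquiv {K : Type*} [CommRing K] {V₁ V₂ : Type*} [AddCommGroup V₁] [Module K V₁]
    [AddCommGroup V₂] [Module K V₂]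
    (Q₁ : QuadraticForm K V₁) (Q₂ : QuadraticForm K V₂) : Prop :=
  ∃ r s : ℕ, (Q₁.prod (hypPow K r)).Equivalent (Q₂.prod (hypPow K s))

/-- The Scharlau transfer of a quadratic form `Q` over `L` along an `F`-linear functional
`t : L → F`: the quadratic form `t ∘ Q` over `F` on `V` viewed as an `F`-vector space. -/
noncomputable def scharlauTransfer {F L : Type*} [Field F] [CommRing L] [Algebra F L]
    (V : Type*) [AddCommGroup V] [Module L V] [Module F V] [IsScalarTower F L V]
    (t : L →ₗ[F] F) (Q : QuadraticForm L V) : QuadraticForm F V :=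
  t.compQuadraticMap' Q

set_option linter.unusedSectionVars false
namespace TransferAux
variable {F : Type*} [Field F] [CharP F 2]

noncomputable def Yb (p : Polynomial F) (d k : ℕ) : AdjoinRoot p :=
  ∑ l ∈ Finset.range (d - k), p.coeff (d - l) • AdjoinRoot.root p ^ (d - 1 - k - l)

noncomputable def Pz (p : Polynomial F) (d : ℕ) : ℤ → F :=
  fun n => if n < 0 then 0 else p.coeff (d - n.toNat)

theorem tpow (p : Polynomial F) (hmonic : p.Monic) (d e : ℕ)
    (hd : p.natDegree = d) (hde : d = 2 * e + 1)
    (t : AdjoinRoot p →ₗ[F] F)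
    (ht : ∀ j : ℕ, j < d → t (AdjoinRoot.root p ^ j) = if j = d - 1 then 1 else 0)
    (γ : ℤ → F)
    (hγ : ∀ n : ℤ, γ n =
      if n < 0 then 0 else ((X : Polynomial F) ^ (d + n.toNat - 1) %ₘ p).coeff (d - 1))
    (m : ℕ) : t (AdjoinRoot.root p ^ m) = γ ((m : ℤ) - 2 * e) := by
  have hdpos : 0 < d := by omega
  have hp1 : p ≠ 1 := fun h => by rw [h] at hd; simp at hd; omega
  have hmod : (X ^ m %ₘ p).natDegree < d := hd ▸ natDegree_modByMonic_lt _ hmonic hp1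
  have key : t (AdjoinRoot.root p ^ m) = (X ^ m %ₘ p).coeff (d - 1) := by
    have h1 : AdjoinRoot.root p ^ m = AdjoinRoot.mk p (X ^ m) := by
      rw [← AdjoinRoot.aeval_eq]; simp
    have h2 : AdjoinRoot.mk p (X ^ m) = AdjoinRoot.mk p (X ^ m %ₘ p) := by
      rw [AdjoinRoot.mk_eq_mk, modByMonic_eq_sub_mul_div _ p, sub_sub_cancel]
      exact Dvd.intro _ rfl
    rw [h1, h2, ← AdjoinRoot.aeval_eq,
      Polynomial.aeval_eq_sum_range' hmod (AdjoinRoot.root p), map_sum]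
    have : ∀ j ∈ Finset.range d, t ((X ^ m %ₘ p).coeff j • AdjoinRoot.root p ^ j)
        = if j = d - 1 then (X ^ m %ₘ p).coeff j else 0 := by
      intro j hj
      rw [_root_.map_smul, smul_eq_mul, ht j (Finset.mem_range.mp hj)]
      split <;> simp
    rw [Finset.sum_congr rfl this, Finset.sum_ite_eq' (Finset.range d) (d - 1)]
    simp [Finset.mem_range, hdpos]
  rw [key, hγ]
  by_cases hm : m < d - 1
  · rw [if_pos (by omega)]
    have : (X ^ m %ₘ p) = X ^ m := (modByMonic_eq_self_iff hmonic).mpr (by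
      rw [degree_X_pow, degree_eq_natDegree hmonic.ne_zero, hd]
      exact_mod_cast by omega)
    rw [this, coeff_X_pow, if_neg (by omega : ¬ d - 1 = m)]
  · rw [if_neg (by omega)]
    have h3 : d + ((m:ℤ) - 2*e).toNat - 1 = m := by omega
    rw [h3]

theorem K2ext (p : Polynomial F) (hmonic : p.Monic) (d e : ℕ)
    (hd : p.natDegree = d) (hde : d = 2 * e + 1)
    (t : AdjoinRoot p →ₗ[F] F)
    (ht : ∀ j : ℕ, j < d → t (AdjoinRoot.root p ^ j) = if j = d - 1 then 1 else 0)
    (γ : ℤ → F)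
    (hγ : ∀ n : ℤ, γ n =
      if n < 0 then 0 else ((X : Polynomial F) ^ (d + n.toNat - 1) %ₘ p).coeff (d - 1))
    (n : ℤ) :
    ∑ k ∈ Finset.range (d + 1), p.coeff (d - k) * γ (n - k) = if n = 0 then 1 else 0 := by
  have hdpos : 0 < d := by omega
  have hγneg : ∀ z : ℤ, z < 0 → γ z = 0 := fun z hz => by rw [hγ, if_pos hz]
  have hγ0 : γ 0 = 1 := by
    rw [hγ, if_neg (by omega)]
    have h1 : ((X : Polynomial F) ^ (d + (0:ℤ).toNat - 1) %ₘ p) = X ^ (d - 1) := by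
      rw [(by omega : d + (0:ℤ).toNat - 1 = d - 1)]
      exact (modByMonic_eq_self_iff hmonic).mpr (by
        rw [degree_X_pow, degree_eq_natDegree hmonic.ne_zero, hd]
        exact_mod_cast by omega)
    rw [h1, coeff_X_pow, if_pos rfl]
  rcases lt_trichotomy n 0 with hn | hn | hn
  · rw [if_neg (by omega)]
    refine Finset.sum_eq_zero fun k _ => ?_
    rw [hγneg _ (by omega), mul_zero]
  · subst hn
    rw [if_pos rfl, Finset.sum_eq_single 0]
    · simp only [Nat.sub_zero, Nat.cast_zero, zero_sub, neg_zero]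
      rw [← hd, hmonic.coeff_natDegree, hγ0, one_mul]
    · intro k _ hk
      rw [hγneg _ (by omega : (0:ℤ) - k < 0), mul_zero]
    · intro h; simp at h
  · obtain ⟨n', rfl⟩ : ∃ n' : ℕ, n = (n' : ℤ) + 1 := ⟨(n - 1).toNat, by omega⟩
    rw [if_neg (by omega)]
    have step : ∀ k ∈ Finset.range (d + 1),
        p.coeff (d - k) * γ ((n' : ℤ) + 1 - k)
          = p.coeff (d - k) * t (AdjoinRoot.root p ^ n' * AdjoinRoot.root p ^ (d - k)) := by
      intro k hk
      have hk' : k ≤ d := by have := Finset.mem_range.mp hk; omega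
      rw [← pow_add, tpow p hmonic d e hd hde t ht γ hγ]
      have harith : ((n' : ℤ) + 1 - k) = (↑(n' + (d - k)) - 2 * ↑e) := by omega
      rw [harith]
    rw [Finset.sum_congr rfl step]
    have : ∑ k ∈ Finset.range (d + 1),
        p.coeff (d - k) * t (AdjoinRoot.root p ^ n' * AdjoinRoot.root p ^ (d - k))
        = t (AdjoinRoot.root p ^ n' *
            ∑ k ∈ Finset.range (d + 1), p.coeff (d - k) • AdjoinRoot.root p ^ (d - k)) := by
      rw [Finset.mul_sum, map_sum]
      refine Finset.sum_congr rfl fun k _ => ?_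
      rw [mul_smul_comm, _root_.map_smul, smul_eq_mul]
    rw [this]
    have hzero : ∑ k ∈ Finset.range (d + 1), p.coeff (d - k) • AdjoinRoot.root p ^ (d - k)
        = 0 := by
      have hrefl := Finset.sum_range_reflect
        (fun j => p.coeff j • AdjoinRoot.root p ^ j) (d + 1)
      simp only [Nat.add_sub_cancel] at hrefl
      rw [hrefl]
      have := Polynomial.aeval_eq_sum_range' (x := AdjoinRoot.root p) (hd ▸ by omega : p.natDegree < d + 1)
      rw [← this, AdjoinRoot.aeval_eq, AdjoinRoot.mk_self]
    rw [hzero, mul_zero, map_zero]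
theorem diag2 (s : Finset ℕ) (f : ℕ → ℕ → F) (hsym : ∀ j l, f j l = f l j) :
    ∑ j ∈ s, ∑ l ∈ s, f j l = ∑ j ∈ s, f j j := by
  classical
  induction s using Finset.induction_on with
  | empty => simp
  | @insert a s ha ih =>
    rw [Finset.sum_insert ha, Finset.sum_insert ha]
    simp only [Finset.sum_insert ha]
    rw [Finset.sum_add_distrib, ih]
    have h1 : ∑ j ∈ s, f j a = ∑ l ∈ s, f a l := Finset.sum_congr rfl fun j _ => hsym j a
    rw [h1]
    have key : f a a + ∑ l ∈ s, f a l + (∑ l ∈ s, f a l + ∑ j ∈ s, f j j)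
        = f a a + ((∑ l ∈ s, f a l + ∑ l ∈ s, f a l) + ∑ j ∈ s, f j j) := by ring
    rw [key, CharTwo.add_self_eq_zero, zero_add]

theorem tri (E : ℕ) (h : ℕ → ℕ → F) :
    ∑ r ∈ Finset.range (E+1), ∑ s ∈ Finset.range (E+1-r), h r s
      = ∑ w ∈ Finset.range (E+1), ∑ s ∈ Finset.range (w+1), h (w - s) s := by
  rw [Finset.sum_sigma', Finset.sum_sigma']
  refine Finset.sum_nbij' (fun x => ⟨x.1 + x.2, x.2⟩) (fun x => ⟨x.1 - x.2, x.2⟩) ?_ ?_ ?_ ?_ ?_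
  · intro x hx
    simp only [Finset.mem_sigma, Finset.mem_range] at hx ⊢
    omega
  · intro x hx
    simp only [Finset.mem_sigma, Finset.mem_range] at hx ⊢
    omega
  · intro x hx
    simp only [Finset.mem_sigma, Finset.mem_range] at hx
    ext <;> simp <;> omega
  · intro x hx
    simp only [Finset.mem_sigma, Finset.mem_range] at hx
    ext <;> simp <;> omega
  · intro x hx
    simp only [Finset.mem_sigma, Finset.mem_range] at hx
    simp only [Nat.add_sub_cancel]

theorem conv_delta (p : Polynomial F) (hmonic : p.Monic) (d e : ℕ)
    (hd : p.natDegree = d) (hde : d = 2 * e + 1)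
    (t : AdjoinRoot p →ₗ[F] F)
    (ht : ∀ j : ℕ, j < d → t (AdjoinRoot.root p ^ j) = if j = d - 1 then 1 else 0)
    (γ : ℤ → F)
    (hγ : ∀ n : ℤ, γ n =
      if n < 0 then 0 else ((X : Polynomial F) ^ (d + n.toNat - 1) %ₘ p).coeff (d - 1))
    (k l : ℕ) (hk : k ≤ e) :
    ∑ m ∈ Finset.range (e+1), Pz p d ((k:ℤ) - m) * γ ((m:ℤ) - l)
      = if k = l then 1 else 0 := by
  have hγneg : ∀ z : ℤ, z < 0 → γ z = 0 := fun z hz => by rw [hγ, if_pos hz]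
  have e1 : ∑ m ∈ Finset.range (e+1), Pz p d ((k:ℤ) - m) * γ ((m:ℤ) - l)
      = ∑ m ∈ Finset.range (k+1), Pz p d ((k:ℤ) - m) * γ ((m:ℤ) - l) := by
    refine (Finset.sum_subset (by intro x hx; simp only [Finset.mem_range] at *; omega) ?_).symm
    intro m hm hm'
    simp only [Finset.mem_range] at hm hm'
    rw [Pz, if_pos (by omega), zero_mul]
  have e2 := (Finset.sum_range_reflect (fun m => Pz p d ((k:ℤ) - m) * γ ((m:ℤ) - l)) (k+1)).symm
  simp only [Nat.add_sub_cancel] at e2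
  have e3 : ∑ m ∈ Finset.range (k+1), Pz p d ((k:ℤ) - ↑(k - m)) * γ ((↑(k - m):ℤ) - l)
      = ∑ m ∈ Finset.range (k+1), p.coeff (d - m) * γ (((k:ℤ) - l) - m) := by
    refine Finset.sum_congr rfl fun m hm => ?_
    have hm' : m ≤ k := by have := Finset.mem_range.mp hm; omega
    have c1 : ((k:ℤ) - ↑(k - m)) = (m : ℤ) := by omega
    have c2 : ((↑(k - m):ℤ) - l) = ((k:ℤ) - l) - m := by omega
    rw [c1, c2]
    simp [Pz]
  have e4 : ∑ m ∈ Finset.range (k+1), p.coeff (d - m) * γ (((k:ℤ) - l) - m)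
      = ∑ m ∈ Finset.range (d+1), p.coeff (d - m) * γ (((k:ℤ) - l) - m) := by
    refine Finset.sum_subset (by intro x hx; simp only [Finset.mem_range] at *; omega) ?_
    intro m hm hm'
    simp only [Finset.mem_range] at hm hm'
    rw [hγneg _ (by omega), mul_zero]
  rw [e1, e2, e3, e4, K2ext p hmonic d e hd hde t ht γ hγ ((k:ℤ) - l)]
  by_cases h : k = l
  · rw [if_pos h, if_pos (by omega)]
  · rw [if_neg (by intro hh; omega), if_neg h]

theorem dual_delta (p : Polynomial F) (hmonic : p.Monic) (d e : ℕ)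
    (hd : p.natDegree = d) (hde : d = 2 * e + 1)
    (t : AdjoinRoot p →ₗ[F] F)
    (ht : ∀ j : ℕ, j < d → t (AdjoinRoot.root p ^ j) = if j = d - 1 then 1 else 0)
    (γ : ℤ → F)
    (hγ : ∀ n : ℤ, γ n =
      if n < 0 then 0 else ((X : Polynomial F) ^ (d + n.toNat - 1) %ₘ p).coeff (d - 1))
    (j k : ℕ) (hj : j < d) (hk : k < d) :
    t (AdjoinRoot.root p ^ j * Yb p d k) = if j = k then 1 else 0 := by
  have hγneg : ∀ z : ℤ, z < 0 → γ z = 0 := fun z hz => by rw [hγ, if_pos hz]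
  have e0 : t (AdjoinRoot.root p ^ j * Yb p d k)
      = ∑ l ∈ Finset.range (d - k), p.coeff (d - l) * γ (((j:ℤ) - k) - l) := by
    rw [Yb, Finset.mul_sum, map_sum]
    refine Finset.sum_congr rfl fun l hl => ?_
    have hl' : l < d - k := Finset.mem_range.mp hl
    rw [mul_smul_comm, _root_.map_smul, smul_eq_mul, ← pow_add,
      tpow p hmonic d e hd hde t ht γ hγ]
    have : ((↑(j + (d - 1 - k - l)) : ℤ) - 2 * e) = ((j:ℤ) - k) - l := by omega
    rw [this]
  have e1 : ∑ l ∈ Finset.range (d - k), p.coeff (d - l) * γ (((j:ℤ) - k) - l)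
      = ∑ l ∈ Finset.range (d + 1), p.coeff (d - l) * γ (((j:ℤ) - k) - l) := by
    refine Finset.sum_subset (by intro x hx; simp only [Finset.mem_range] at *; omega) ?_
    intro l hl hl'
    simp only [Finset.mem_range] at hl hl'
    rw [hγneg _ (by omega), mul_zero]
  rw [e0, e1, K2ext p hmonic d e hd hde t ht γ hγ ((j:ℤ) - k)]
  by_cases h : j = k
  · rw [if_pos (by omega), if_pos h]
  · rw [if_neg (by intro hh; omega), if_neg h]

theorem cc_val (p : Polynomial F) (hmonic : p.Monic) (d e : ℕ)
    [hch : CharP (AdjoinRoot p) 2]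
    (hd : p.natDegree = d) (hde : d = 2 * e + 1)
    (t : AdjoinRoot p →ₗ[F] F)
    (ht : ∀ j : ℕ, j < d → t (AdjoinRoot.root p ^ j) = if j = d - 1 then 1 else 0)
    (γ : ℤ → F)
    (hγ : ∀ n : ℤ, γ n =
      if n < 0 then 0 else ((X : Polynomial F) ^ (d + n.toNat - 1) %ₘ p).coeff (d - 1))
    (i m : ℕ) (hm : m ≤ e) :
    t (AdjoinRoot.root p ^ i * (Yb p d (e+m) * Yb p d (e+m)))
      = ∑ s ∈ Finset.range (e+1-m), (p.coeff (d - s))^2 * γ ((i:ℤ) - 2*m - 2*s) := by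
  have hsq : Yb p d (e+m) * Yb p d (e+m)
      = ∑ l ∈ Finset.range (d - (e+m)),
          (p.coeff (d - l))^2 • AdjoinRoot.root p ^ (2*(d - 1 - (e+m) - l)) := by
    rw [Yb, CharTwo.sum_mul_self]
    refine Finset.sum_congr rfl fun l hl => ?_
    rw [smul_mul_smul_comm, ← pow_add, pow_two, two_mul]
  rw [hsq, Finset.mul_sum, map_sum]
  have hrange : d - (e + m) = e + 1 - m := by omega
  rw [hrange]
  refine Finset.sum_congr rfl fun l hl => ?_
  have hl' : l < e + 1 - m := Finset.mem_range.mp hl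
  rw [mul_smul_comm, _root_.map_smul, smul_eq_mul, ← pow_add,
    tpow p hmonic d e hd hde t ht γ hγ]
  have : ((↑(i + 2*(d - 1 - (e+m) - l)) : ℤ) - 2 * e) = (i:ℤ) - 2*m - 2*l := by omega
  rw [this]

theorem K3' (p : Polynomial F) (hmonic : p.Monic) (d e : ℕ)
    (hd : p.natDegree = d) (hde : d = 2 * e + 1)
    (t : AdjoinRoot p →ₗ[F] F)
    (ht : ∀ j : ℕ, j < d → t (AdjoinRoot.root p ^ j) = if j = d - 1 then 1 else 0)
    (γ : ℤ → F)
    (hγ : ∀ n : ℤ, γ n =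
      if n < 0 then 0 else ((X : Polynomial F) ^ (d + n.toNat - 1) %ₘ p).coeff (d - 1))
    (k : ℕ) (hk : k ≤ e) :
    ∑ m ∈ Finset.range (e+1), (Pz p d ((k:ℤ) - m))^2 * γ (2*m) = p.coeff (d - 2*k) := by
  have hγneg : ∀ z : ℤ, z < 0 → γ z = 0 := fun z hz => by rw [hγ, if_pos hz]
  have hD1 : ∑ j ∈ Finset.range (d+1), ∑ l ∈ Finset.range (d+1),
      p.coeff (d - j) * p.coeff (d - l) * γ ((2*(k:ℤ) - j) - l) = p.coeff (d - 2*k) := by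
    have inner : ∀ j ∈ Finset.range (d+1), ∑ l ∈ Finset.range (d+1),
        p.coeff (d - j) * p.coeff (d - l) * γ ((2*(k:ℤ) - j) - l)
          = p.coeff (d - j) * (if 2*(k:ℤ) - j = 0 then 1 else 0) := by
      intro j hj
      rw [← K2ext p hmonic d e hd hde t ht γ hγ (2*(k:ℤ) - j), Finset.mul_sum]
      exact Finset.sum_congr rfl fun l _ => by ring
    rw [Finset.sum_congr rfl inner, Finset.sum_eq_single (2*k)]
    · rw [if_pos (by omega), mul_one]
    · intro j hj hjne
      rw [if_neg (by intro hh; omega), mul_zero]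
    · intro h
      exact absurd (Finset.mem_range.mpr (by omega)) h
  have hD2 : ∑ j ∈ Finset.range (d+1), ∑ l ∈ Finset.range (d+1),
      p.coeff (d - j) * p.coeff (d - l) * γ ((2*(k:ℤ) - j) - l)
        = ∑ j ∈ Finset.range (d+1), p.coeff (d - j) * p.coeff (d - j) * γ ((2*(k:ℤ) - j) - j) :=
    diag2 _ _ (by
      intro j l
      have : ((2*(k:ℤ) - l) - j) = ((2*(k:ℤ) - j) - l) := by ring
      rw [this]
      ring)
  -- now truncate, reflect, convert
  have e1 : ∑ j ∈ Finset.range (d+1), p.coeff (d - j) * p.coeff (d - j) * γ ((2*(k:ℤ) - j) - j)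
      = ∑ j ∈ Finset.range (k+1), p.coeff (d - j) * p.coeff (d - j) * γ ((2*(k:ℤ) - j) - j) := by
    refine (Finset.sum_subset (by intro x hx; simp only [Finset.mem_range] at *; omega) ?_).symm
    intro j hj hj'
    simp only [Finset.mem_range] at hj hj'
    rw [hγneg _ (by omega), mul_zero]
  have e2 := (Finset.sum_range_reflect
    (fun j => p.coeff (d - j) * p.coeff (d - j) * γ ((2*(k:ℤ) - j) - j)) (k+1)).symm
  simp only [Nat.add_sub_cancel] at e2
  have e3 : ∑ j ∈ Finset.range (k+1),
      p.coeff (d - (k - j)) * p.coeff (d - (k - j)) * γ ((2*(k:ℤ) - ↑(k - j)) - ↑(k - j))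
      = ∑ m ∈ Finset.range (k+1), (Pz p d ((k:ℤ) - m))^2 * γ (2*m) := by
    refine Finset.sum_congr rfl fun m hm => ?_
    have hm' : m ≤ k := by have := Finset.mem_range.mp hm; omega
    have c1 : ((2*(k:ℤ) - ↑(k - m)) - ↑(k - m)) = 2*(m:ℤ) := by omega
    have c2 : Pz p d ((k:ℤ) - m) = p.coeff (d - (k - m)) := by
      simp only [Pz, if_neg (by omega : ¬ ((k:ℤ) - m < 0))]
      congr 1
      omega
    rw [c1, c2, pow_two]
  have e4 : ∑ m ∈ Finset.range (k+1), (Pz p d ((k:ℤ) - m))^2 * γ (2*m)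
      = ∑ m ∈ Finset.range (e+1), (Pz p d ((k:ℤ) - m))^2 * γ (2*m) := by
    refine Finset.sum_subset (by intro x hx; simp only [Finset.mem_range] at *; omega) ?_
    intro m hm hm'
    simp only [Finset.mem_range] at hm hm'
    simp only [Pz, if_pos (by omega : ((k:ℤ) - m < 0))]
    norm_num
  rw [← e4, ← e3, ← e2, ← e1, ← hD2]
  exact hD1

theorem K4' (p : Polynomial F) (hmonic : p.Monic) (d e : ℕ)
    (hd : p.natDegree = d) (hde : d = 2 * e + 1)
    (t : AdjoinRoot p →ₗ[F] F)
    (ht : ∀ j : ℕ, j < d → t (AdjoinRoot.root p ^ j) = if j = d - 1 then 1 else 0)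
    (γ : ℤ → F)
    (hγ : ∀ n : ℤ, γ n =
      if n < 0 then 0 else ((X : Polynomial F) ^ (d + n.toNat - 1) %ₘ p).coeff (d - 1))
    (l : ℕ) (hl : l ≤ e) (i : ℕ) :
    ∑ m ∈ Finset.range (e+1), (γ ((m:ℤ) - l))^2 *
      (∑ s ∈ Finset.range (e+1-m), (p.coeff (d - s))^2 * γ ((i:ℤ) - 2*m - 2*s))
      = γ ((i:ℤ) - 2*l) := by
  have hγneg : ∀ z : ℤ, z < 0 → γ z = 0 := fun z hz => by rw [hγ, if_pos hz]
  set N : ℤ := (i:ℤ) - 2*l with hN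
  have eA : ∑ m ∈ Finset.range (e+1), (γ ((m:ℤ) - l))^2 *
      (∑ s ∈ Finset.range (e+1-m), (p.coeff (d - s))^2 * γ ((i:ℤ) - 2*m - 2*s))
      = ∑ m ∈ Finset.Ico l (e+1), (γ ((m:ℤ) - l))^2 *
      (∑ s ∈ Finset.range (e+1-m), (p.coeff (d - s))^2 * γ ((i:ℤ) - 2*m - 2*s)) := by
    refine (Finset.sum_subset (by intro x hx; simp only [Finset.mem_Ico, Finset.mem_range] at *; omega) ?_).symm
    intro m hm hm'
    simp only [Finset.mem_Ico, Finset.mem_range] at hm hm'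
    rw [hγneg _ (by omega), pow_two, zero_mul, zero_mul]
  have eB : ∑ m ∈ Finset.Ico l (e+1), (γ ((m:ℤ) - l))^2 *
      (∑ s ∈ Finset.range (e+1-m), (p.coeff (d - s))^2 * γ ((i:ℤ) - 2*m - 2*s))
      = ∑ r ∈ Finset.range (e-l+1), ∑ s ∈ Finset.range (e-l+1-r),
          (γ (r:ℤ))^2 * ((p.coeff (d - s))^2 * γ (N - 2*r - 2*s)) := by
    rw [Finset.sum_Ico_eq_sum_range]
    rw [(by omega : e + 1 - l = e - l + 1)]
    refine Finset.sum_congr rfl fun r hr => ?_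
    have hr' : r ≤ e - l := by have := Finset.mem_range.mp hr; omega
    rw [Finset.mul_sum]
    rw [(by omega : e + 1 - (l + r) = e - l + 1 - r)]
    refine Finset.sum_congr rfl fun s hs => ?_
    have c1 : ((↑(l + r):ℤ) - l) = (r:ℤ) := by omega
    have c2 : ((i:ℤ) - 2*(↑(l+r):ℤ) - 2*s) = N - 2*r - 2*s := by rw [hN]; push_cast; ring
    rw [c1, c2]
  have eC := tri (F := F) (e - l) (fun r s => (γ (r:ℤ))^2 * ((p.coeff (d - s))^2 * γ (N - 2*r - 2*s)))
  have eD : ∑ w ∈ Finset.range (e-l+1), ∑ s ∈ Finset.range (w+1),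
      (γ ((w - s : ℕ):ℤ))^2 * ((p.coeff (d - s))^2 * γ (N - 2*(w - s : ℕ) - 2*s))
      = ∑ w ∈ Finset.range (e-l+1),
          (if w = 0 then γ N else 0) := by
    refine Finset.sum_congr rfl fun w hw => ?_
    have hw' : w ≤ e - l := by have := Finset.mem_range.mp hw; omega
    have inner1 : ∀ s ∈ Finset.range (w+1),
        (γ ((w - s : ℕ):ℤ))^2 * ((p.coeff (d - s))^2 * γ (N - 2*(w - s : ℕ) - 2*s))
          = (p.coeff (d - s) * γ ((w:ℤ) - s))^2 * γ (N - 2*w) := by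
      intro s hs
      have hs' : s ≤ w := by have := Finset.mem_range.mp hs; omega
      have c1 : ((↑(w - s):ℤ)) = (w:ℤ) - s := by omega
      rw [c1]
      have c2 : (N - 2*((w:ℤ) - s) - 2*s) = N - 2*w := by ring
      rw [c2, mul_pow]
      ring
    rw [Finset.sum_congr rfl inner1, ← Finset.sum_mul, ← CharTwo.sum_sq]
    have ext : ∑ s ∈ Finset.range (w+1), p.coeff (d - s) * γ ((w:ℤ) - s)
        = ∑ s ∈ Finset.range (d+1), p.coeff (d - s) * γ ((w:ℤ) - s) := by
      refine Finset.sum_subset (by intro x hx; simp only [Finset.mem_range] at *; omega) ?_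
      intro s hs hs'
      simp only [Finset.mem_range] at hs hs'
      rw [hγneg _ (by omega), mul_zero]
    rw [ext, K2ext p hmonic d e hd hde t ht γ hγ (w:ℤ)]
    by_cases hw0 : w = 0
    · rw [if_pos (by omega : (w:ℤ) = 0), if_pos hw0, one_pow, one_mul]
      subst hw0
      norm_num
    · rw [if_neg (by intro hh; omega), if_neg hw0]
      norm_num
  rw [eA, eB, eC, eD, Finset.sum_ite_eq' (Finset.range (e-l+1)) 0 (fun _ => γ N)]
  rw [if_pos (Finset.mem_range.mpr (by omega))]

section Maps

variable (F)

/-- The big auxiliary space. -/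
abbrev V2 (e : ℕ) := (Fin (e+1) → F × F) × (Fin e → F × F)

variable {F}

noncomputable def wU (e : ℕ) (k : Fin (e+1)) : V2 F e →ₗ[F] F :=
  (LinearMap.fst F F F) ∘ₗ (LinearMap.proj k) ∘ₗ (LinearMap.fst F _ _)

noncomputable def wV (e : ℕ) (k : Fin (e+1)) : V2 F e →ₗ[F] F :=
  (LinearMap.snd F F F) ∘ₗ (LinearMap.proj k) ∘ₗ (LinearMap.fst F _ _)

noncomputable def zS (e : ℕ) (k : Fin e) : V2 F e →ₗ[F] F :=
  (LinearMap.fst F F F) ∘ₗ (LinearMap.proj k) ∘ₗ (LinearMap.snd F _ _)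

noncomputable def zT (e : ℕ) (k : Fin e) : V2 F e →ₗ[F] F :=
  (LinearMap.snd F F F) ∘ₗ (LinearMap.proj k) ∘ₗ (LinearMap.snd F _ _)

@[simp] lemma wU_apply (e : ℕ) (k : Fin (e+1)) (w : V2 F e) : wU e k w = (w.1 k).1 := rfl
@[simp] lemma wV_apply (e : ℕ) (k : Fin (e+1)) (w : V2 F e) : wV e k w = (w.1 k).2 := rfl
@[simp] lemma zS_apply (e : ℕ) (k : Fin e) (w : V2 F e) : zS e k w = (w.2 k).1 := rfl
@[simp] lemma zT_apply (e : ℕ) (k : Fin e) (w : V2 F e) : zT e k w = (w.2 k).2 := rfl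

/-- coefficient of `root^j` in the `u`-part. -/
noncomputable def ucL (p : Polynomial F) (d e : ℕ) (a : F) (cc : ℕ → F) (j : ℕ) :
    V2 F e →ₗ[F] F :=
  if h : j < e then zS e ⟨j, h⟩ + (a * cc j) • zT e ⟨j, h⟩
  else ∑ k : Fin (e+1), Pz p d ((k:ℤ) - (j - e : ℕ)) • wU e k

/-- coefficient of `Yb j` in the `v`-part. -/
noncomputable def vcL (e : ℕ) (γ : ℤ → F) (j : ℕ) : V2 F e →ₗ[F] F :=
  if h : j < e then zT e ⟨j, h⟩
  else ∑ k : Fin (e+1), γ (((j - e : ℕ) : ℤ) - (k:ℕ)) • wV e k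

lemma ucL_lt (p : Polynomial F) (d e : ℕ) (a : F) (cc : ℕ → F) (j : ℕ) (h : j < e)
    (w : V2 F e) :
    ucL p d e a cc j w = (w.2 ⟨j, h⟩).1 + (a * cc j) * (w.2 ⟨j, h⟩).2 := by
  simp [ucL, dif_pos h]

lemma ucL_ge (p : Polynomial F) (d e : ℕ) (a : F) (cc : ℕ → F) (m : ℕ) (h : e ≤ m)
    (w : V2 F e) :
    ucL p d e a cc m w = ∑ k : Fin (e+1), Pz p d ((k:ℤ) - (m - e : ℕ)) * (w.1 k).1 := by
  rw [ucL, dif_neg (by omega)]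
  simp

lemma vcL_lt (e : ℕ) (γ : ℤ → F) (j : ℕ) (h : j < e) (w : V2 F e) :
    vcL e γ j w = (w.2 ⟨j, h⟩).2 := by
  simp [vcL, dif_pos h]

lemma vcL_ge (e : ℕ) (γ : ℤ → F) (m : ℕ) (h : e ≤ m) (w : V2 F e) :
    vcL e γ m w = ∑ k : Fin (e+1), γ (((m - e : ℕ) : ℤ) - (k:ℕ)) * (w.1 k).2 := by
  rw [vcL, dif_neg (by omega)]
  simp

/-- the forward linear map. -/
noncomputable def fMap (p : Polynomial F) (d e : ℕ) (γ : ℤ → F) (a : F) (cc : ℕ → F) :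
    V2 F e →ₗ[F] (AdjoinRoot p × AdjoinRoot p) :=
  (∑ j ∈ Finset.range d,
      (LinearMap.toSpanSingleton F _ (AdjoinRoot.root p ^ j)) ∘ₗ (ucL p d e a cc j)).prod
  (∑ j ∈ Finset.range d,
      (LinearMap.toSpanSingleton F _ (Yb p d j)) ∘ₗ (vcL e γ j))

lemma fMap_fst (p : Polynomial F) (d e : ℕ) (γ : ℤ → F) (a : F) (cc : ℕ → F) (w : V2 F e) :
    (fMap p d e γ a cc w).1 = ∑ j ∈ Finset.range d, ucL p d e a cc j w • AdjoinRoot.root p ^ j := by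
  simp [fMap, LinearMap.toSpanSingleton_apply]

lemma fMap_snd (p : Polynomial F) (d e : ℕ) (γ : ℤ → F) (a : F) (cc : ℕ → F) (w : V2 F e) :
    (fMap p d e γ a cc w).2 = ∑ j ∈ Finset.range d, vcL e γ j w • Yb p d j := by
  simp [fMap, LinearMap.toSpanSingleton_apply]

/-- the backward linear map. -/
noncomputable def gMap (p : Polynomial F) (d e : ℕ) (t : AdjoinRoot p →ₗ[F] F)
    (γ : ℤ → F) (a : F) (cc : ℕ → F) :
    (AdjoinRoot p × AdjoinRoot p) →ₗ[F] V2 F e :=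
  LinearMap.prod
    (LinearMap.pi fun k : Fin (e+1) =>
      LinearMap.prod
        (∑ m ∈ Finset.range (e+1), γ ((m:ℤ) - (k:ℕ)) •
          ((t ∘ₗ LinearMap.mulLeft F (Yb p d (e+m))) ∘ₗ LinearMap.fst F _ _))
        (∑ m ∈ Finset.range (e+1), Pz p d (((k:ℕ):ℤ) - m) •
          ((t ∘ₗ LinearMap.mulLeft F (AdjoinRoot.root p ^ (e+m))) ∘ₗ LinearMap.snd F _ _)))
    (LinearMap.pi fun k : Fin e =>
      LinearMap.prod
        ((t ∘ₗ LinearMap.mulLeft F (Yb p d (k:ℕ))) ∘ₗ LinearMap.fst F _ _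
          + (a * cc (k:ℕ)) • ((t ∘ₗ LinearMap.mulLeft F (AdjoinRoot.root p ^ (k:ℕ))) ∘ₗ LinearMap.snd F _ _))
        ((t ∘ₗ LinearMap.mulLeft F (AdjoinRoot.root p ^ (k:ℕ))) ∘ₗ LinearMap.snd F _ _))

end Maps

section Exp

variable (p : Polynomial F) (hmonic : p.Monic) (d e : ℕ)
    (hd : p.natDegree = d) (hde : d = 2 * e + 1)
    (t : AdjoinRoot p →ₗ[F] F)
    (ht : ∀ j : ℕ, j < d → t (AdjoinRoot.root p ^ j) = if j = d - 1 then 1 else 0)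
    (γ : ℤ → F)
    (hγ : ∀ n : ℤ, γ n =
      if n < 0 then 0 else ((X : Polynomial F) ^ (d + n.toNat - 1) %ₘ p).coeff (d - 1))

include hmonic hd hde ht hγ

theorem t_x_comb (c : ℕ → F) (j : ℕ) (hj : j < d) :
    t (AdjoinRoot.root p ^ j * ∑ k ∈ Finset.range d, c k • Yb p d k) = c j := by
  rw [Finset.mul_sum, map_sum]
  have step : ∀ k ∈ Finset.range d,
      t (AdjoinRoot.root p ^ j * (c k • Yb p d k)) = if k = j then c k else 0 := by
    intro k hk
    rw [mul_smul_comm, _root_.map_smul, smul_eq_mul,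
      dual_delta p hmonic d e hd hde t ht γ hγ j k hj (Finset.mem_range.mp hk)]
    by_cases h : j = k
    · rw [if_pos h, if_pos h.symm, mul_one]
    · rw [if_neg h, if_neg (fun hh => h hh.symm), mul_zero]
  rw [Finset.sum_congr rfl step, Finset.sum_ite_eq' (Finset.range d) j c,
    if_pos (Finset.mem_range.mpr hj)]

theorem t_Y_comb (c : ℕ → F) (j : ℕ) (hj : j < d) :
    t (Yb p d j * ∑ k ∈ Finset.range d, c k • AdjoinRoot.root p ^ k) = c j := by
  rw [Finset.mul_sum, map_sum]
  have step : ∀ k ∈ Finset.range d,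
      t (Yb p d j * (c k • AdjoinRoot.root p ^ k)) = if k = j then c k else 0 := by
    intro k hk
    rw [mul_smul_comm, _root_.map_smul, smul_eq_mul, mul_comm (Yb p d j),
      dual_delta p hmonic d e hd hde t ht γ hγ k j (Finset.mem_range.mp hk) hj]
    by_cases h : k = j
    · rw [if_pos h, if_pos h, mul_one]
    · rw [if_neg h, if_neg h, mul_zero]
  rw [Finset.sum_congr rfl step, Finset.sum_ite_eq' (Finset.range d) j c,
    if_pos (Finset.mem_range.mpr hj)]

theorem left_inv (a : F) (cc : ℕ → F) (w : V2 F e) :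
    gMap p d e t γ a cc (fMap p d e γ a cc w) = w := by
  have hed : ∀ m : ℕ, m ≤ e → e + m < d := by omega
  have huc : ∀ m : ℕ, m ≤ e →
      t (Yb p d (e+m) * (fMap p d e γ a cc w).1) = ucL p d e a cc (e+m) w := by
    intro m hm
    rw [fMap_fst]
    exact t_Y_comb p hmonic d e hd hde t ht γ hγ _ _ (hed m hm)
  have hvc : ∀ j : ℕ, j < d →
      t (AdjoinRoot.root p ^ j * (fMap p d e γ a cc w).2) = vcL e γ j w := by
    intro j hjd
    rw [fMap_snd]
    exact t_x_comb p hmonic d e hd hde t ht γ hγ _ _ hjd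
  have hucj : ∀ j : ℕ, j < d →
      t (Yb p d j * (fMap p d e γ a cc w).1) = ucL p d e a cc j w := by
    intro j hjd
    rw [fMap_fst]
    exact t_Y_comb p hmonic d e hd hde t ht γ hγ _ _ hjd
  refine Prod.ext ?_ ?_
  · funext k
    have hk : (k : ℕ) ≤ e := by omega
    refine Prod.ext ?_ ?_
    · show (∑ m ∈ Finset.range (e+1), γ ((m:ℤ) - (k:ℕ)) •
          ((t ∘ₗ LinearMap.mulLeft F (Yb p d (e+m))) ∘ₗ
            LinearMap.fst F _ _)) (fMap p d e γ a cc w) = (w.1 k).1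
      rw [LinearMap.sum_apply]
      have e1 : ∀ m ∈ Finset.range (e+1),
          (γ ((m:ℤ) - (k:ℕ)) • ((t ∘ₗ LinearMap.mulLeft F (Yb p d (e+m))) ∘ₗ
            LinearMap.fst F _ _)) (fMap p d e γ a cc w)
          = ∑ k' : Fin (e+1), (Pz p d ((k':ℕ) - (m:ℤ)) * γ ((m:ℤ) - (k:ℕ))) * (w.1 k').1 := by
        intro m hm
        have hm' : m ≤ e := by have := Finset.mem_range.mp hm; omega
        rw [LinearMap.smul_apply, LinearMap.comp_apply, LinearMap.comp_apply]
        simp only [LinearMap.fst_apply, LinearMap.mulLeft_apply]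
        rw [huc m hm', ucL_ge p d e a cc (e+m) (by omega) w, smul_eq_mul, Finset.mul_sum]
        refine Finset.sum_congr rfl fun k' _ => ?_
        rw [(by omega : e + m - e = m)]
        ring
      rw [Finset.sum_congr rfl e1, Finset.sum_comm]
      have e2 : ∀ k' : Fin (e+1),
          ∑ m ∈ Finset.range (e+1), (Pz p d ((k':ℕ) - (m:ℤ)) * γ ((m:ℤ) - (k:ℕ))) * (w.1 k').1
          = (if (k' : ℕ) = (k : ℕ) then 1 else 0) * (w.1 k').1 := by
        intro k'
        rw [← Finset.sum_mul,
          conv_delta p hmonic d e hd hde t ht γ hγ (k':ℕ) (k:ℕ) (by omega)]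
      rw [Finset.sum_congr rfl fun k' _ => e2 k']
      have e3 : ∀ k' : Fin (e+1), (if (k':ℕ) = (k:ℕ) then (1:F) else 0) * (w.1 k').1
          = if k' = k then (w.1 k').1 else 0 := by
        intro k'
        by_cases h : k' = k
        · subst h; simp
        · rw [if_neg (by simpa [Fin.val_inj] using h), if_neg h, zero_mul]
      rw [Finset.sum_congr rfl fun k' _ => e3 k', Finset.sum_ite_eq' Finset.univ k]
      simp
    · show (∑ m ∈ Finset.range (e+1), Pz p d (((k:ℕ):ℤ) - m) •
          ((t ∘ₗ LinearMap.mulLeft F (AdjoinRoot.root p ^ (e+m))) ∘ₗ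
            LinearMap.snd F _ _)) (fMap p d e γ a cc w) = (w.1 k).2
      rw [LinearMap.sum_apply]
      have e1 : ∀ m ∈ Finset.range (e+1),
          (Pz p d (((k:ℕ):ℤ) - m) • ((t ∘ₗ LinearMap.mulLeft F (AdjoinRoot.root p ^ (e+m))) ∘ₗ
            LinearMap.snd F _ _)) (fMap p d e γ a cc w)
          = ∑ k' : Fin (e+1), (Pz p d (((k:ℕ):ℤ) - m) * γ ((m:ℤ) - (k':ℕ))) * (w.1 k').2 := by
        intro m hm
        have hm' : m ≤ e := by have := Finset.mem_range.mp hm; omega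
        rw [LinearMap.smul_apply, LinearMap.comp_apply, LinearMap.comp_apply]
        simp only [LinearMap.snd_apply, LinearMap.mulLeft_apply]
        rw [hvc (e+m) (by omega), vcL_ge e γ (e+m) (by omega) w, smul_eq_mul, Finset.mul_sum]
        refine Finset.sum_congr rfl fun k' _ => ?_
        rw [(by omega : e + m - e = m)]
        ring
      rw [Finset.sum_congr rfl e1, Finset.sum_comm]
      have e2 : ∀ k' : Fin (e+1),
          ∑ m ∈ Finset.range (e+1), (Pz p d (((k:ℕ):ℤ) - m) * γ ((m:ℤ) - (k':ℕ))) * (w.1 k').2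
          = (if (k : ℕ) = (k' : ℕ) then 1 else 0) * (w.1 k').2 := by
        intro k'
        rw [← Finset.sum_mul,
          conv_delta p hmonic d e hd hde t ht γ hγ (k:ℕ) (k':ℕ) (by omega)]
      rw [Finset.sum_congr rfl fun k' _ => e2 k']
      have e3 : ∀ k' : Fin (e+1), (if (k:ℕ) = (k':ℕ) then (1:F) else 0) * (w.1 k').2
          = if k' = k then (w.1 k').2 else 0 := by
        intro k'
        by_cases h : k' = k
        · subst h; simp
        · rw [if_neg (by simpa [eq_comm, Fin.val_inj] using h), if_neg h, zero_mul]
      rw [Finset.sum_congr rfl fun k' _ => e3 k', Finset.sum_ite_eq' Finset.univ k]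
      simp
  · funext k
    have hkd : (k : ℕ) < d := by omega
    refine Prod.ext ?_ ?_
    · show ((t ∘ₗ LinearMap.mulLeft F (Yb p d (k:ℕ))) ∘ₗ LinearMap.fst F (AdjoinRoot p) (AdjoinRoot p)
          + (a * cc (k:ℕ)) • ((t ∘ₗ LinearMap.mulLeft F (AdjoinRoot.root p ^ (k:ℕ))) ∘ₗ
            LinearMap.snd F (AdjoinRoot p) (AdjoinRoot p))) (fMap p d e γ a cc w) = (w.2 k).1
      rw [LinearMap.add_apply, LinearMap.smul_apply]
      simp only [LinearMap.comp_apply, LinearMap.fst_apply, LinearMap.snd_apply,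
        LinearMap.mulLeft_apply]
      rw [hucj (k:ℕ) hkd, hvc (k:ℕ) hkd, ucL_lt p d e a cc (k:ℕ) k.isLt w,
        vcL_lt e γ (k:ℕ) k.isLt w, smul_eq_mul]
      rw [add_assoc, CharTwo.add_self_eq_zero, add_zero]
    · show ((t ∘ₗ LinearMap.mulLeft F (AdjoinRoot.root p ^ (k:ℕ))) ∘ₗ
          LinearMap.snd F (AdjoinRoot p) (AdjoinRoot p)) (fMap p d e γ a cc w) = (w.2 k).2
      simp only [LinearMap.comp_apply, LinearMap.snd_apply, LinearMap.mulLeft_apply]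
      rw [hvc (k:ℕ) hkd, vcL_lt e γ (k:ℕ) k.isLt w]

end Exp

theorem char2_helper (x y z : F) : (x + z*y)*y + z*(y*y) = x*y := by
  have : (x + z*y)*y + z*(y*y) = x*y + (z*(y*y) + z*(y*y)) := by ring
  rw [this, CharTwo.add_self_eq_zero, add_zero]

section FormVal

variable (p : Polynomial F) (hmonic : p.Monic) (d e : ℕ)
    [hch : CharP (AdjoinRoot p) 2]
    (hd : p.natDegree = d) (hde : d = 2 * e + 1)
    (t : AdjoinRoot p →ₗ[F] F)
    (ht : ∀ j : ℕ, j < d → t (AdjoinRoot.root p ^ j) = if j = d - 1 then 1 else 0)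
    (γ : ℤ → F)
    (hγ : ∀ n : ℤ, γ n =
      if n < 0 then 0 else ((X : Polynomial F) ^ (d + n.toNat - 1) %ₘ p).coeff (d - 1))

include hmonic hd hde ht hγ

theorem part_A (a : F) (cc : ℕ → F) (w : V2 F e) :
    t ((fMap p d e γ a cc w).1 * (fMap p d e γ a cc w).1)
      = ∑ k : Fin (e+1), p.coeff (d - 2*(k:ℕ)) * ((w.1 k).1)^2 := by
  have hγneg : ∀ z : ℤ, z < 0 → γ z = 0 := fun z hz => by rw [hγ, if_pos hz]
  rw [fMap_fst, CharTwo.sum_mul_self, map_sum]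
  have e1 : ∀ j ∈ Finset.range d,
      t (ucL p d e a cc j w • AdjoinRoot.root p ^ j * (ucL p d e a cc j w • AdjoinRoot.root p ^ j))
        = (ucL p d e a cc j w)^2 * γ ((↑(j + j) : ℤ) - 2*e) := by
    intro j hj
    rw [smul_mul_smul_comm, ← pow_add, _root_.map_smul, smul_eq_mul, ← pow_two,
      tpow p hmonic d e hd hde t ht γ hγ]
  rw [Finset.sum_congr rfl e1]
  rw [← Finset.sum_range_add_sum_Ico _ (by omega : e ≤ d)]
  have e2 : ∑ j ∈ Finset.range e, (ucL p d e a cc j w)^2 * γ ((↑(j + j) : ℤ) - 2*e) = 0 := by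
    refine Finset.sum_eq_zero fun j hj => ?_
    have := Finset.mem_range.mp hj
    rw [hγneg _ (by omega), mul_zero]
  rw [e2, zero_add, Finset.sum_Ico_eq_sum_range, (by omega : d - e = e + 1)]
  have e3 : ∀ m ∈ Finset.range (e+1),
      (ucL p d e a cc (e + m) w)^2 * γ ((↑((e+m) + (e+m)) : ℤ) - 2*e)
        = ∑ k : Fin (e+1), (Pz p d (((k:ℕ):ℤ) - m))^2 * γ (2*(m:ℤ)) * ((w.1 k).1)^2 := by
    intro m hm
    have hm' : m ≤ e := by have := Finset.mem_range.mp hm; omega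
    rw [ucL_ge p d e a cc (e+m) (by omega) w, (by omega : e + m - e = m)]
    rw [CharTwo.sum_sq, Finset.sum_mul]
    refine Finset.sum_congr rfl fun k' _ => ?_
    rw [mul_pow]
    have c1 : ((↑((e+m) + (e+m)) : ℤ) - 2*e) = 2*(m:ℤ) := by omega
    rw [c1]
    ring
  rw [Finset.sum_congr rfl e3, Finset.sum_comm]
  refine Finset.sum_congr rfl fun k _ => ?_
  have hk : (k:ℕ) ≤ e := by omega
  rw [← Finset.sum_mul, K3' p hmonic d e hd hde t ht γ hγ (k:ℕ) hk]

theorem part_B (a : F) (cc : ℕ → F) (w : V2 F e) :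
    t ((fMap p d e γ a cc w).1 * (fMap p d e γ a cc w).2)
      = (∑ j ∈ Finset.range e, ucL p d e a cc j w * vcL e γ j w)
        + ∑ k : Fin (e+1), (w.1 k).1 * (w.1 k).2 := by
  rw [fMap_fst, fMap_snd, Finset.sum_mul_sum, map_sum]
  have e1 : ∀ j ∈ Finset.range d,
      t (∑ k ∈ Finset.range d,
          (ucL p d e a cc j w • AdjoinRoot.root p ^ j) * (vcL e γ k w • Yb p d k))
        = ucL p d e a cc j w * vcL e γ j w := by
    intro j hj
    rw [map_sum]
    have e2 : ∀ k ∈ Finset.range d,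
        t ((ucL p d e a cc j w • AdjoinRoot.root p ^ j) * (vcL e γ k w • Yb p d k))
          = if k = j then ucL p d e a cc j w * vcL e γ k w else 0 := by
      intro k hk
      rw [smul_mul_smul_comm, _root_.map_smul, smul_eq_mul,
        dual_delta p hmonic d e hd hde t ht γ hγ j k (Finset.mem_range.mp hj)
          (Finset.mem_range.mp hk)]
      by_cases h : j = k
      · rw [if_pos h, if_pos h.symm, mul_one]
      · rw [if_neg h, if_neg (fun hh => h hh.symm), mul_zero]
    rw [Finset.sum_congr rfl e2, Finset.sum_ite_eq' (Finset.range d) j,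
      if_pos (Finset.mem_range.mpr (Finset.mem_range.mp hj))]
  rw [Finset.sum_congr rfl e1, ← Finset.sum_range_add_sum_Ico _ (by omega : e ≤ d)]
  congr 1
  rw [Finset.sum_Ico_eq_sum_range, (by omega : d - e = e + 1)]
  have e3 : ∀ m ∈ Finset.range (e+1),
      ucL p d e a cc (e+m) w * vcL e γ (e+m) w
        = ∑ k : Fin (e+1), ∑ l : Fin (e+1),
            (Pz p d (((k:ℕ):ℤ) - m) * γ ((m:ℤ) - (l:ℕ))) * ((w.1 k).1 * (w.1 l).2) := by
    intro m hm
    rw [ucL_ge p d e a cc (e+m) (by omega) w, vcL_ge e γ (e+m) (by omega) w,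
      (by omega : e + m - e = m), Finset.sum_mul_sum]
    exact Finset.sum_congr rfl fun k _ => Finset.sum_congr rfl fun l _ => by ring
  rw [Finset.sum_congr rfl e3, Finset.sum_comm]
  have e4 : ∀ k : Fin (e+1),
      ∑ m ∈ Finset.range (e+1), ∑ l : Fin (e+1),
          (Pz p d (((k:ℕ):ℤ) - m) * γ ((m:ℤ) - (l:ℕ))) * ((w.1 k).1 * (w.1 l).2)
        = ∑ l : Fin (e+1), (if (k:ℕ) = (l:ℕ) then 1 else 0) * ((w.1 k).1 * (w.1 l).2) := by
    intro k
    rw [Finset.sum_comm]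
    refine Finset.sum_congr rfl fun l _ => ?_
    rw [← Finset.sum_mul, conv_delta p hmonic d e hd hde t ht γ hγ (k:ℕ) (l:ℕ) (by omega)]
  rw [Finset.sum_congr rfl fun k _ => e4 k]
  refine Finset.sum_congr rfl fun k _ => ?_
  have e5 : ∀ l : Fin (e+1), (if (k:ℕ) = (l:ℕ) then (1:F) else 0) * ((w.1 k).1 * (w.1 l).2)
      = if l = k then (w.1 k).1 * (w.1 l).2 else 0 := by
    intro l
    by_cases h : l = k
    · subst h; simp
    · rw [if_neg (by simpa [eq_comm, Fin.val_inj] using h), if_neg h, zero_mul]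
  rw [Finset.sum_congr rfl fun l _ => e5 l, Finset.sum_ite_eq' Finset.univ k]
  simp

theorem part_C (i : ℕ) (a : F) (w : V2 F e) :
    t (AdjoinRoot.root p ^ i *
        ((fMap p d e γ a (fun j => t (AdjoinRoot.root p ^ i * (Yb p d j * Yb p d j))) w).2 *
         (fMap p d e γ a (fun j => t (AdjoinRoot.root p ^ i * (Yb p d j * Yb p d j))) w).2))
      = (∑ j ∈ Finset.range e,
          (vcL e γ j w)^2 * t (AdjoinRoot.root p ^ i * (Yb p d j * Yb p d j)))
        + ∑ l : Fin (e+1), γ ((i:ℤ) - 2*(l:ℕ)) * ((w.1 l).2)^2 := by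
  set cc : ℕ → F := fun j => t (AdjoinRoot.root p ^ i * (Yb p d j * Yb p d j)) with hcc
  rw [fMap_snd, CharTwo.sum_mul_self, Finset.mul_sum, map_sum]
  have e1 : ∀ j ∈ Finset.range d,
      t (AdjoinRoot.root p ^ i * ((vcL e γ j w • Yb p d j) * (vcL e γ j w • Yb p d j)))
        = (vcL e γ j w)^2 * cc j := by
    intro j hj
    rw [smul_mul_smul_comm, mul_smul_comm, _root_.map_smul, smul_eq_mul, ← pow_two, hcc]
  rw [Finset.sum_congr rfl e1, ← Finset.sum_range_add_sum_Ico _ (by omega : e ≤ d)]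
  congr 1
  rw [Finset.sum_Ico_eq_sum_range, (by omega : d - e = e + 1)]
  have e3 : ∀ m ∈ Finset.range (e+1),
      (vcL e γ (e+m) w)^2 * cc (e+m)
        = ∑ l : Fin (e+1), (γ ((m:ℤ) - (l:ℕ)))^2 *
            (∑ s ∈ Finset.range (e+1-m), (p.coeff (d - s))^2 * γ ((i:ℤ) - 2*m - 2*s))
            * ((w.1 l).2)^2 := by
    intro m hm
    have hm' : m ≤ e := by have := Finset.mem_range.mp hm; omega
    rw [vcL_ge e γ (e+m) (by omega) w, (by omega : e + m - e = m), CharTwo.sum_sq, hcc]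
    beta_reduce
    rw [cc_val p hmonic d e hd hde t ht γ hγ i m hm', Finset.sum_mul]
    refine Finset.sum_congr rfl fun l _ => ?_
    rw [mul_pow]
    ring
  rw [Finset.sum_congr rfl e3, Finset.sum_comm]
  refine Finset.sum_congr rfl fun l _ => ?_
  have e4 : ∀ m ∈ Finset.range (e+1),
      (γ ((m:ℤ) - (l:ℕ)))^2 *
          (∑ s ∈ Finset.range (e+1-m), (p.coeff (d - s))^2 * γ ((i:ℤ) - 2*m - 2*s))
          * ((w.1 l).2)^2
        = ((γ ((m:ℤ) - (l:ℕ)))^2 *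
          (∑ s ∈ Finset.range (e+1-m), (p.coeff (d - s))^2 * γ ((i:ℤ) - 2*m - 2*s)))
          * ((w.1 l).2)^2 := fun m hm => rfl
  rw [Finset.sum_congr rfl e4, ← Finset.sum_mul,
    K4' p hmonic d e hd hde t ht γ hγ (l:ℕ) (by omega) i]

theorem form_value (i : ℕ) (a : F) (w : V2 F e) :
    t ((fMap p d e γ a (fun j => t (AdjoinRoot.root p ^ i * (Yb p d j * Yb p d j))) w).1 *
        (fMap p d e γ a (fun j => t (AdjoinRoot.root p ^ i * (Yb p d j * Yb p d j))) w).1)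
    + t ((fMap p d e γ a (fun j => t (AdjoinRoot.root p ^ i * (Yb p d j * Yb p d j))) w).1 *
        (fMap p d e γ a (fun j => t (AdjoinRoot.root p ^ i * (Yb p d j * Yb p d j))) w).2)
    + a * t (AdjoinRoot.root p ^ i *
        ((fMap p d e γ a (fun j => t (AdjoinRoot.root p ^ i * (Yb p d j * Yb p d j))) w).2 *
         (fMap p d e γ a (fun j => t (AdjoinRoot.root p ^ i * (Yb p d j * Yb p d j))) w).2))
    = (∑ k : Fin (e+1), (p.coeff (d - 2*(k:ℕ)) * ((w.1 k).1 * (w.1 k).1)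
        + (w.1 k).1 * (w.1 k).2
        + (a * γ ((i:ℤ) - 2*(k:ℕ))) * ((w.1 k).2 * (w.1 k).2)))
      + ∑ k : Fin e, (w.2 k).1 * (w.2 k).2 := by
  set cc : ℕ → F := fun j => t (AdjoinRoot.root p ^ i * (Yb p d j * Yb p d j)) with hcc
  rw [part_A p hmonic d e hd hde t ht γ hγ a cc w,
    part_B p hmonic d e hd hde t ht γ hγ a cc w,
    part_C p hmonic d e hd hde t ht γ hγ i a w]
  have hZ : (∑ j ∈ Finset.range e, ucL p d e a cc j w * vcL e γ j w)
      + a * ∑ j ∈ Finset.range e, (vcL e γ j w)^2 * cc j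
      = ∑ k : Fin e, (w.2 k).1 * (w.2 k).2 := by
    rw [Finset.mul_sum, ← Finset.sum_add_distrib]
    have e1 : ∀ j ∈ Finset.range e,
        ucL p d e a cc j w * vcL e γ j w + a * ((vcL e γ j w)^2 * cc j)
          = (if h : j < e then (w.2 ⟨j, h⟩).1 * (w.2 ⟨j, h⟩).2 else 0) := by
      intro j hj
      have hj' : j < e := Finset.mem_range.mp hj
      rw [dif_pos hj', ucL_lt p d e a cc j hj' w, vcL_lt e γ j hj' w]
      have : a * ((w.2 ⟨j, hj'⟩).2^2 * cc j) = (a * cc j) * ((w.2 ⟨j, hj'⟩).2 * (w.2 ⟨j, hj'⟩).2) := by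
        ring
      rw [this, char2_helper]
    rw [Finset.sum_congr rfl e1, ← Fin.sum_univ_eq_sum_range
      (fun j => if h : j < e then (w.2 ⟨j, h⟩).1 * (w.2 ⟨j, h⟩).2 else 0) e]
    exact Finset.sum_congr rfl fun k _ => by rw [dif_pos k.isLt]
  have hsplit : ∑ k : Fin (e+1), (p.coeff (d - 2*(k:ℕ)) * ((w.1 k).1 * (w.1 k).1)
        + (w.1 k).1 * (w.1 k).2
        + (a * γ ((i:ℤ) - 2*(k:ℕ))) * ((w.1 k).2 * (w.1 k).2))
      = (∑ k : Fin (e+1), p.coeff (d - 2*(k:ℕ)) * ((w.1 k).1)^2)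
        + (∑ k : Fin (e+1), (w.1 k).1 * (w.1 k).2)
        + a * ∑ l : Fin (e+1), γ ((i:ℤ) - 2*(l:ℕ)) * ((w.1 l).2)^2 := by
    rw [Finset.mul_sum, ← Finset.sum_add_distrib, ← Finset.sum_add_distrib]
    refine Finset.sum_congr rfl fun k _ => ?_
    ring
  rw [hsplit, mul_add, ← hZ]
  ring

end FormVal

end TransferAux

/-- Lemma 4.2(i), odd degree case: for `p` monic irreducible of odd degree `d = 2e+1` over a
field `F` of characteristic `2`, the Scharlau transfer of `[1, a·x^i]` is Witt equivalent to
`⊥_{j=0}^{e} [p_{2j}, a·γ_{i-2j}]`. -/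
theorem transfer_one_ax_pow_odd_degree
    (F : Type*) [Field F] [CharP F 2] (p : Polynomial F)
    (hmonic : p.Monic) (hirr : Irreducible p)
    (d e : ℕ) (hd : p.natDegree = d) (hde : d = 2 * e + 1)
    (t : AdjoinRoot p →ₗ[F] F)
    (ht : ∀ j : ℕ, j < d → t (AdjoinRoot.root p ^ j) = if j = d - 1 then 1 else 0)
    (γ : ℤ → F)
    (hγ : ∀ n : ℤ, γ n =
      if n < 0 then 0 else ((X : Polynomial F) ^ (d + n.toNat - 1) %ₘ p).coeff (d - 1))
    (a : F) (i : ℕ) :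
    WittEquiv
      (scharlauTransfer _ t
        (binQF (AdjoinRoot p) 1 (algebraMap F (AdjoinRoot p) a * AdjoinRoot.root p ^ i)))
      (QuadraticMap.pi fun j : Fin (e + 1) =>
        binQF F (p.coeff (d - 2 * (j : ℕ))) (a * γ ((i : ℤ) - 2 * (j : ℕ)))) := by
  classical
  haveI : Fact (Irreducible p) := ⟨hirr⟩
  haveI hch : CharP (AdjoinRoot p) 2 :=
    charP_of_injective_algebraMap (algebraMap F (AdjoinRoot p)).injective 2
  have hp0 : p ≠ 0 := hmonic.ne_zero
  haveI : Module.Finite F (AdjoinRoot p) :=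
    Module.Finite.of_basis (AdjoinRoot.powerBasis hp0).basis
  set cc : ℕ → F :=
    fun j => t (AdjoinRoot.root p ^ i * (TransferAux.Yb p d j * TransferAux.Yb p d j)) with hcc
  set F1 : TransferAux.V2 F e →ₗ[F] (AdjoinRoot p × AdjoinRoot p) × (Fin 0 → F × F) :=
    LinearMap.prod (TransferAux.fMap p d e γ a cc) 0 with hF1
  have hinj : Function.Injective F1 := by
    have hli : Function.LeftInverse (fun v : (AdjoinRoot p × AdjoinRoot p) × (Fin 0 → F × F) =>
        TransferAux.gMap p d e t γ a cc v.1) F1 := by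
      intro w
      have := TransferAux.left_inv p hmonic d e hd hde t ht γ hγ a cc w
      simpa [hF1, LinearMap.prod_apply] using this
    exact hli.injective
  have hdim : Module.finrank F (TransferAux.V2 F e)
      = Module.finrank F ((AdjoinRoot p × AdjoinRoot p) × (Fin 0 → F × F)) := by
    have hfr : Module.finrank F (AdjoinRoot p) = d := by
      rw [(AdjoinRoot.powerBasis hp0).finrank, AdjoinRoot.powerBasis_dim, hd]
    simp only [Module.finrank_prod, Module.finrank_pi_fintype, hfr,
      Module.finrank_self, Finset.sum_const, Finset.card_univ, Fintype.card_fin, smul_eq_mul]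
    omega
  set φ := F1.linearEquivOfInjective hinj hdim with hφ
  refine ⟨0, e, QuadraticMap.Equivalent.symm ⟨⟨φ, ?_⟩⟩⟩
  intro w
  have hφw : φ w = F1 w := F1.linearEquivOfInjective_apply hinj hdim w
  show ((scharlauTransfer _ t
      (binQF (AdjoinRoot p) 1 (algebraMap F (AdjoinRoot p) a * AdjoinRoot.root p ^ i))).prod
      (hypPow F 0)) (φ w)
    = ((QuadraticMap.pi fun j : Fin (e + 1) =>
        binQF F (p.coeff (d - 2 * (j : ℕ))) (a * γ ((i : ℤ) - 2 * (j : ℕ)))).prod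
      (hypPow F e)) w
  rw [hφw]
  have key := TransferAux.form_value p hmonic d e hd hde t ht γ hγ i a w
  simp only [hF1, LinearMap.prod_apply, QuadraticMap.prod_apply, QuadraticMap.pi_apply,
    scharlauTransfer, LinearMap.compQuadraticMap'_apply, binQF, hypPow, hypQF,
    QuadraticMap.add_apply, QuadraticMap.smul_apply, QuadraticMap.linMulLin_apply,
    LinearMap.fst_apply, LinearMap.snd_apply, LinearMap.zero_apply, Pi.zero_apply, Function.prod,
    smul_eq_mul, one_mul, map_add, Finset.univ_eq_empty, Finset.sum_empty, add_zero]
  have hb : t (algebraMap F (AdjoinRoot p) a * AdjoinRoot.root p ^ i *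
      ((TransferAux.fMap p d e γ a cc w).2 * (TransferAux.fMap p d e γ a cc w).2))
      = a * t (AdjoinRoot.root p ^ i *
        ((TransferAux.fMap p d e γ a cc w).2 * (TransferAux.fMap p d e γ a cc w).2)) := by
    rw [mul_assoc, ← Algebra.smul_def, _root_.map_smul, smul_eq_mul]
  rw [hb]
  rw [← hcc] at key
  linear_combination key
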